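/- Let 𝓘 be a maximal nested collection on the vertex set V of a finite tree Γ. Then for every v ∈ V the family {I ∈ 𝓘 : v ∈ I} is nonempty and totally ordered by inclusion, so it has a least element I_v; and the map v ↦ I_v is a bijection from V onto 𝓘. In particular |𝓘| = |V|. -/

import Mathlib

namespace Paper

variable {V : Type*}

/-- The subgraph of `G` induced on `S` is connected (any two vertices of `S` are joined
by a walk inside `S`). -/
def Conn (G : SimpleGraph V) (S : Set V) : Prop := (G.induce S).Preconnected

/-- `C` is a connected component of (the subgraph of `G` induced on) `U`:
a maximal nonempty connected subset of `U`. -/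
def IsCompOf (G : SimpleGraph V) (C U : Set V) : Prop :=
  C.Nonempty ∧ C ⊆ U ∧ Conn G C ∧
    ∀ D : Set V, C ⊆ D → D ⊆ U → Conn G D → D = C

/-- A nested collection on (the vertex set of) `G`: a family of nonempty connected
subsets such that (1) any two members are nested or disjoint, and (2) the connected
components of the union of any pairwise disjoint subfamily are exactly the members of
that subfamily. -/
def Nested (G : SimpleGraph V) (𝓘 : Set (Set V)) : Prop :=
  (∀ S ∈ 𝓘, S.Nonempty ∧ Conn G S) ∧
  (∀ S ∈ 𝓘, ∀ T ∈ 𝓘, S ⊆ T ∨ T ⊆ S ∨ S ∩ T = ∅) ∧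
  (∀ 𝓙 ⊆ 𝓘, (𝓙.Pairwise fun A B => A ∩ B = ∅) →
    ∀ C : Set V, IsCompOf G C (⋃₀ 𝓙) ↔ C ∈ 𝓙)

/-- A maximal nested collection: a nested collection whose union is all of `V` and
which is not properly contained in any other nested collection. -/
def MaxNested (G : SimpleGraph V) (𝓘 : Set (Set V)) : Prop :=
  Nested G 𝓘 ∧ ⋃₀ 𝓘 = Set.univ ∧
    ∀ 𝓙 : Set (Set V), Nested G 𝓙 → 𝓘 ⊆ 𝓙 → 𝓙 = 𝓘

/-- `Iv` assigns to each vertex `v` the smallest element of `𝓘` containing `v`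
(denoted `I_v`). -/
def IsLeastContaining (𝓘 : Set (Set V)) (Iv : V → Set V) : Prop :=
  ∀ v : V, Iv v ∈ 𝓘 ∧ v ∈ Iv v ∧ ∀ J ∈ 𝓘, v ∈ J → Iv v ⊆ J

/-- The vertex set `[x,y]` of the unique path in a tree `G` from `x` to `y`:
the vertices lying on every path from `x` to `y`. -/
def interval (G : SimpleGraph V) (x y : V) : Set V :=
  {u | ∀ p : G.Walk x y, p.IsPath → u ∈ p.support}

/-- `S` is rooted with respect to the nested collection (with least-member function
`Iv`): `S` is nonempty, connected, and, `m` denoting the unique element of `S` with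
`S ⊆ I_m`, for all `i, j ∈ S` one has `i ∈ I_j` iff `j ∈ [i, m]`. -/
def Rooted (G : SimpleGraph V) (Iv : V → Set V) (S : Set V) : Prop :=
  S.Nonempty ∧ Conn G S ∧
    ∃ m ∈ S, S ⊆ Iv m ∧ ∀ i ∈ S, ∀ j ∈ S, (i ∈ Iv j ↔ j ∈ interval G i m)

/-- `S̄ := {v ∈ S : I_v ⊄ S}`. -/
def bar (Iv : V → Set V) (S : Set V) : Set V := {v ∈ S | ¬ Iv v ⊆ S}

/-- `S` is weakly rooted: `S` is nonempty, connected, and either `S̄ = ∅` or `S̄` is a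
(nonempty) connected rooted set. -/
def WeaklyRooted (G : SimpleGraph V) (Iv : V → Set V) (S : Set V) : Prop :=
  S.Nonempty ∧ Conn G S ∧ (bar Iv S = ∅ ∨ Rooted G Iv (bar Iv S))

/-- Two (nonempty connected) subsets `I`, `J` are compatible if `I ⊆ J`, or `J ⊆ I`, or
they are disjoint and no edge of `G` joins a vertex of `I` to a vertex of `J`. -/
def Compatible (G : SimpleGraph V) (I J : Set V) : Prop :=
  I ⊆ J ∨ J ⊆ I ∨ (I ∩ J = ∅ ∧ ∀ a ∈ I, ∀ b ∈ J, ¬ G.Adj a b)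

end Paper

namespace Aux

open Set

variable {V : Type*} (G : SimpleGraph V)

/-- Reachability within a set `S` via `G`-edges. -/
def reachIn (S : Set V) (a b : V) : Prop :=
  Relation.ReflTransGen (fun x y => x ∈ S ∧ y ∈ S ∧ G.Adj x y) a b

variable {G}

lemma reachIn_mono {S T : Set V} (h : S ⊆ T) {a b : V} (hr : reachIn G S a b) :
    reachIn G T a b :=
  Relation.ReflTransGen.mono (r := fun x y => x ∈ S ∧ y ∈ S ∧ G.Adj x y)
    (p := fun x y => x ∈ T ∧ y ∈ T ∧ G.Adj x y) (fun x y hxy => ⟨h hxy.1, h hxy.2.1, hxy.2.2⟩) a b hr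

lemma reachIn_symm {S : Set V} {a b : V} (hr : reachIn G S a b) : reachIn G S b a :=
  @Std.Symm.symm _ (Relation.ReflTransGen (fun x y => x ∈ S ∧ y ∈ S ∧ G.Adj x y))
    (@Relation.ReflTransGen.stdSymm _ _ ⟨fun x y hxy => ⟨hxy.2.1, hxy.1, hxy.2.2.symm⟩⟩) _ _ hr

lemma reachIn_closed {S P : Set V} (hcl : ∀ a b, a ∈ P → a ∈ S → b ∈ S → G.Adj a b → b ∈ P)
    {c d : V} (hc : c ∈ P) (h : reachIn G S c d) : d ∈ P := by
  induction h with
  | refl => exact hc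
  | tail _ step ih => exact hcl _ _ ih step.1 step.2.1 step.2.2

lemma reachable_of_reachIn {S : Set V} {a b : V} (ha : a ∈ S) (h : reachIn G S a b) :
    ∀ hb : b ∈ S, (G.induce S).Reachable ⟨a, ha⟩ ⟨b, hb⟩ := by
  induction h with
  | refl => intro hb; exact SimpleGraph.Reachable.refl _
  | tail _ step ih =>
    intro hc
    exact (ih step.1).trans (SimpleGraph.Adj.reachable (by exact step.2.2))

lemma reachIn_of_walk {S : Set V} : ∀ {a b : S} (_ : (G.induce S).Walk a b),
    reachIn G S a.1 b.1 := by
  intro a b w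
  induction w with
  | nil => exact Relation.ReflTransGen.refl
  | @cons x y z h p ih => exact Relation.ReflTransGen.head ⟨x.2, y.2, h⟩ ih

lemma conn_iff {S : Set V} : Paper.Conn G S ↔ ∀ a ∈ S, ∀ b ∈ S, reachIn G S a b := by
  constructor
  · intro h a ha b hb
    obtain ⟨w⟩ := h ⟨a, ha⟩ ⟨b, hb⟩
    exact reachIn_of_walk w
  · intro h x y
    exact reachable_of_reachIn x.2 (h x.1 x.2 y.1 y.2) y.2

/-- Components of a union of pairwise disjoint, mutually non-adjacent, nonempty connected
sets are exactly the members of the family. -/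
lemma comp_iff {𝓙 : Set (Set V)} (h1 : ∀ J ∈ 𝓙, J.Nonempty ∧ Paper.Conn G J)
    (hedge : ∀ J ∈ 𝓙, ∀ K ∈ 𝓙, J ≠ K → ∀ a ∈ J, ∀ b ∈ K, ¬ G.Adj a b)
    (C : Set V) : Paper.IsCompOf G C (⋃₀ 𝓙) ↔ C ∈ 𝓙 := by
  have key : ∀ D : Set V, Paper.Conn G D → D ⊆ ⋃₀ 𝓙 → ∀ J ∈ 𝓙, (D ∩ J).Nonempty → D ⊆ J := by
    intro D hD hDU J hJ ⟨c, hcD, hcJ⟩ d hd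
    refine reachIn_closed (P := J) (S := D) ?_ hcJ (conn_iff.mp hD c hcD d hd)
    intro a b haJ _ hbD hab
    obtain ⟨K, hK, hbK⟩ := hDU hbD
    by_contra hbJ
    exact hedge J hJ K hK (fun h => hbJ (h ▸ hbK)) a haJ b hbK hab
  constructor
  · rintro ⟨⟨c, hc⟩, hsub, hconn, hmaxC⟩
    obtain ⟨J, hJ, hcJ⟩ := hsub hc
    have hCJ : C ⊆ J := key C hconn hsub J hJ ⟨c, hc, hcJ⟩
    have hJC := hmaxC J hCJ (subset_sUnion_of_mem hJ) (h1 J hJ).2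
    exact hJC ▸ hJ
  · intro hC
    obtain ⟨hne, hconn⟩ := h1 C hC
    refine ⟨hne, subset_sUnion_of_mem hC, hconn, ?_⟩
    intro D hCD hDU hD
    obtain ⟨c, hc⟩ := hne
    exact subset_antisymm (key D hD hDU C hC ⟨c, hCD hc, hc⟩) hCD

/-- In a nested collection, disjoint members have no edges between them. -/
lemma nested_no_edge {𝓘 : Set (Set V)} (h : Paper.Nested G 𝓘) {I J : Set V}
    (hI : I ∈ 𝓘) (hJ : J ∈ 𝓘) (hIJ : I ∩ J = ∅) {a b : V} (ha : a ∈ I) (hb : b ∈ J) :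
    ¬ G.Adj a b := by
  intro hab
  obtain ⟨h1, _, h3⟩ := h
  have hne : I ≠ J := by
    rintro rfl
    exact Set.eq_empty_iff_forall_notMem.mp hIJ a ⟨ha, ha⟩
  have hpair : ({I, J} : Set (Set V)).Pairwise (fun A B => A ∩ B = ∅) := by
    intro A hA B hB hAB
    rcases hA with rfl | rfl <;> rcases hB with rfl | rfl
    · exact absurd rfl hAB
    · exact hIJ
    · rw [Set.inter_comm]; exact hIJ
    · exact absurd rfl hAB
  have hsub : ({I, J} : Set (Set V)) ⊆ 𝓘 := by rintro K (rfl | rfl) <;> assumption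
  have hiff := h3 {I, J} hsub hpair (I ∪ J)
  rw [Set.sUnion_pair] at hiff
  have hconnI := (h1 I hI).2
  have hconnJ := (h1 J hJ).2
  have hconn : Paper.Conn G (I ∪ J) := by
    rw [conn_iff]
    have rI : ∀ x ∈ I, reachIn G (I ∪ J) x a := fun x hx =>
      reachIn_mono Set.subset_union_left (conn_iff.mp hconnI x hx a ha)
    have rJ : ∀ x ∈ J, reachIn G (I ∪ J) x b := fun x hx =>
      reachIn_mono Set.subset_union_right (conn_iff.mp hconnJ x hx b hb)
    have step : reachIn G (I ∪ J) a b :=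
      Relation.ReflTransGen.single ⟨Or.inl ha, Or.inr hb, hab⟩
    rintro x (hx | hx) y (hy | hy)
    · exact (rI x hx).trans (reachIn_symm (rI y hy))
    · exact ((rI x hx).trans step).trans (reachIn_symm (rJ y hy))
    · exact ((rJ x hx).trans (reachIn_symm step)).trans (reachIn_symm (rI y hy))
    · exact (rJ x hx).trans (reachIn_symm (rJ y hy))
  have hcomp : Paper.IsCompOf G (I ∪ J) (I ∪ J) :=
    ⟨⟨a, Or.inl ha⟩, subset_rfl, hconn, fun D h1' h2' _ => subset_antisymm h2' h1'⟩
  rcases hiff.mp hcomp with hIJ' | hIJ'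
  · have hbI : b ∈ I := by rw [← hIJ']; exact Or.inr hb
    exact Set.eq_empty_iff_forall_notMem.mp hIJ b ⟨hbI, hb⟩
  · have haJ : a ∈ J := by rw [← hIJ']; exact Or.inl ha
    exact Set.eq_empty_iff_forall_notMem.mp hIJ a ⟨ha, haJ⟩

/-- Pairwise compatibility implies nestedness. -/
lemma nested_of_compatible {𝓘 : Set (Set V)}
    (h1 : ∀ S ∈ 𝓘, S.Nonempty ∧ Paper.Conn G S)
    (h2 : ∀ S ∈ 𝓘, ∀ T ∈ 𝓘, S ⊆ T ∨ T ⊆ S ∨ (S ∩ T = ∅ ∧ ∀ a ∈ S, ∀ b ∈ T, ¬ G.Adj a b)) :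
    Paper.Nested G 𝓘 := by
  refine ⟨h1, fun S hS T hT => ?_, fun 𝓙 h𝓙 hpair C =>
    comp_iff (fun J hJ => h1 J (h𝓙 hJ)) ?_ C⟩
  · rcases h2 S hS T hT with h | h | ⟨h, _⟩
    · exact Or.inl h
    · exact Or.inr (Or.inl h)
    · exact Or.inr (Or.inr h)
  · intro J hJ K hK hne a ha b hb hab
    have hdisj : J ∩ K = ∅ := hpair hJ hK hne
    rcases h2 J (h𝓙 hJ) K (h𝓙 hK) with h | h | ⟨_, h⟩
    · exact Set.eq_empty_iff_forall_notMem.mp hdisj a ⟨ha, h ha⟩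
    · exact Set.eq_empty_iff_forall_notMem.mp hdisj b ⟨h hb, hb⟩
    · exact h a ha b hb hab

end Aux


/-- Let `𝓘` be a maximal nested collection on the vertex set `V` of a finite tree. Then
for every `v ∈ V` the family `{I ∈ 𝓘 : v ∈ I}` is nonempty and totally ordered by
inclusion, so it has a least element `I_v`; and the map `v ↦ I_v` is a bijection from
`V` onto `𝓘`. In particular `|𝓘| = |V|`. -/
theorem statement_6 {V : Type*} [Fintype V] (G : SimpleGraph V) (hG : G.IsTree)
    (𝓘 : Set (Set V)) (h𝓘 : Paper.MaxNested G 𝓘) :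
    (∀ v : V, {I | I ∈ 𝓘 ∧ v ∈ I}.Nonempty ∧
      IsChain (· ⊆ ·) {I | I ∈ 𝓘 ∧ v ∈ I} ∧
      ∃ I₀ ∈ 𝓘, v ∈ I₀ ∧ ∀ J ∈ 𝓘, v ∈ J → I₀ ⊆ J) ∧
    (∀ Iv : V → Set V, Paper.IsLeastContaining 𝓘 Iv →
      Set.BijOn Iv Set.univ 𝓘) ∧
    𝓘.ncard = Fintype.card V := by
  obtain ⟨⟨hmem, hpairwise, hcomps⟩, hU, hmaximal⟩ := h𝓘
  have hnested : Paper.Nested G 𝓘 := ⟨hmem, hpairwise, hcomps⟩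
  -- Part 1
  have part1 : ∀ v : V, {I | I ∈ 𝓘 ∧ v ∈ I}.Nonempty ∧
      IsChain (· ⊆ ·) {I | I ∈ 𝓘 ∧ v ∈ I} ∧
      ∃ I₀ ∈ 𝓘, v ∈ I₀ ∧ ∀ J ∈ 𝓘, v ∈ J → I₀ ⊆ J := by
    intro v
    have hvU : v ∈ ⋃₀ 𝓘 := by rw [hU]; trivial
    obtain ⟨I, hI, hvI⟩ := hvU
    have hFne : ({I | I ∈ 𝓘 ∧ v ∈ I} : Set (Set V)).Nonempty := ⟨I, hI, hvI⟩
    have hchain : IsChain (· ⊆ ·) {I | I ∈ 𝓘 ∧ v ∈ I} := by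
      intro A hA B hB hAB
      rcases hpairwise A hA.1 B hB.1 with h | h | h
      · exact Or.inl h
      · exact Or.inr h
      · exact (Set.eq_empty_iff_forall_notMem.mp h v ⟨hA.2, hB.2⟩).elim
    refine ⟨hFne, hchain, ?_⟩
    obtain ⟨I₀, hI₀, hmin⟩ := Set.Finite.exists_minimalFor id {I | I ∈ 𝓘 ∧ v ∈ I}
      (Set.toFinite _) hFne
    refine ⟨I₀, hI₀.1, hI₀.2, ?_⟩
    intro J hJ hvJ
    rcases eq_or_ne I₀ J with rfl | hne
    · exact subset_rfl
    rcases hchain hI₀ ⟨hJ, hvJ⟩ hne with h | h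
    · exact h
    · exact Set.le_iff_subset.mp (hmin ⟨hJ, hvJ⟩ h)
  have part2 : ∀ Iv : V → Set V, Paper.IsLeastContaining 𝓘 Iv →
      Set.BijOn Iv Set.univ 𝓘 := by
    intro Iv hIv
    have hmaps : ∀ v : V, Iv v ∈ 𝓘 := fun v => (hIv v).1
    -- surjectivity
    have hsurj : ∀ I ∈ 𝓘, ∃ v, Iv v = I := by
      intro I hI
      by_contra hns
      push_neg at hns
      set P : Set (Set V) := {J | J ∈ 𝓘 ∧ J ⊂ I} with hP
      set 𝓒 : Set (Set V) := {C ∈ P | ∀ K ∈ P, C ⊆ K → K = C} with h𝓒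
      have hmaxex : ∀ J ∈ P, ∃ C ∈ 𝓒, J ⊆ C := by
        intro J hJ
        obtain ⟨C, hC, hCmax⟩ := Set.Finite.exists_maximalFor id {K ∈ P | J ⊆ K}
          (Set.toFinite _) ⟨J, hJ, subset_rfl⟩
        refine ⟨C, ⟨hC.1, fun K hK hCK => subset_antisymm (hCmax ⟨hK, hC.2.trans hCK⟩ hCK) hCK⟩, hC.2⟩
      have h𝓒sub : 𝓒 ⊆ 𝓘 := fun C hC => hC.1.1
      have h𝓒pair : 𝓒.Pairwise (fun A B => A ∩ B = ∅) := by
        intro C hC C' hC' hne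
        rcases hpairwise C hC.1.1 C' hC'.1.1 with h | h | h
        · exact absurd (hC.2 C' hC'.1 h) (Ne.symm hne)
        · exact absurd (hC'.2 C hC.1 h) hne
        · exact h
      have hunion : ⋃₀ 𝓒 = I := by
        apply subset_antisymm
        · exact Set.sUnion_subset fun C hC => hC.1.2.subset
        · intro v hv
          have hIvP : Iv v ∈ P := ⟨(hIv v).1,
            ssubset_of_subset_of_ne ((hIv v).2.2 I hI hv) (hns v)⟩
          obtain ⟨C, hC, hsub⟩ := hmaxex (Iv v) hIvP
          exact ⟨C, hC, hsub (hIv v).2.1⟩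
      have hiff := hcomps 𝓒 h𝓒sub h𝓒pair I
      rw [hunion] at hiff
      have hIcomp : Paper.IsCompOf G I I :=
        ⟨(hmem I hI).1, subset_rfl, (hmem I hI).2, fun D h1' h2' _ => subset_antisymm h2' h1'⟩
      exact (hiff.mp hIcomp).1.2.ne rfl
    -- injectivity
    have hinj : ∀ u v : V, Iv u = Iv v → u = v := by
      intro u v heq
      by_contra hne
      set I : Set V := Iv u with hIdef
      have hI : I ∈ 𝓘 := (hIv u).1
      have huI : u ∈ I := (hIv u).2.1
      have hvI : v ∈ I := heq ▸ (hIv v).2.1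
      have hleastu : ∀ J ∈ 𝓘, u ∈ J → I ⊆ J := (hIv u).2.2
      have hleastv : ∀ J ∈ 𝓘, v ∈ J → I ⊆ J := fun J hJ hvJ => heq ▸ (hIv v).2.2 J hJ hvJ
      set A : Set V := {a | a ∈ I ∧ a ≠ v ∧ Aux.reachIn G (I \ {v}) u a} with hA
      have huA : u ∈ A := ⟨huI, hne, Relation.ReflTransGen.refl⟩
      have hAI : A ⊆ I := fun a ha => ha.1
      have hvA : v ∉ A := fun h => h.2.1 rfl
      have hcl : ∀ a ∈ A, ∀ b, b ∈ I → b ≠ v → G.Adj a b → b ∈ A := by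
        intro a ha b hbI hbv hab
        exact ⟨hbI, hbv, ha.2.2.tail ⟨⟨ha.1, ha.2.1⟩, ⟨hbI, hbv⟩, hab⟩⟩
      have hstrength : ∀ {x : V}, Aux.reachIn G (I \ {v}) u x → Aux.reachIn G A u x := by
        intro x hx
        induction hx with
        | refl => exact Relation.ReflTransGen.refl
        | tail hpre step ih =>
          exact ih.tail ⟨⟨step.1.1, step.1.2, hpre⟩,
            ⟨step.2.1.1, step.2.1.2, hpre.tail step⟩, step.2.2⟩
      have hconnA : Paper.Conn G A := by
        rw [Aux.conn_iff]
        intro a ha b hb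
        exact (Aux.reachIn_symm (hstrength ha.2.2)).trans (hstrength hb.2.2)
      have hAnot : A ∉ 𝓘 := by
        intro hAmem
        exact hvA (hleastu A hAmem huA hvI)
      have hcompat : ∀ J ∈ 𝓘, A ⊆ J ∨ J ⊆ A ∨ (A ∩ J = ∅ ∧ ∀ a ∈ A, ∀ b ∈ J, ¬ G.Adj a b) := by
        intro J hJ
        rcases hpairwise I hI J hJ with hsub | hsub | hdisj
        · exact Or.inl (hAI.trans hsub)
        · by_cases hvJ : v ∈ J
          · exact Or.inl (hAI.trans (hleastv J hJ hvJ))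
          by_cases hmeet : (J ∩ A).Nonempty
          · obtain ⟨c, hcJ, hcA⟩ := hmeet
            refine Or.inr (Or.inl ?_)
            intro b hbJ
            refine Aux.reachIn_closed (P := A) (S := J) ?_ hcA
              (Aux.conn_iff.mp (hmem J hJ).2 c hcJ b hbJ)
            intro x y hxA _ hyJ hxy
            exact hcl x hxA y (hsub hyJ) (fun h => hvJ (h ▸ hyJ)) hxy
          · refine Or.inr (Or.inr ⟨?_, ?_⟩)
            · rw [Set.inter_comm]
              exact Set.not_nonempty_iff_eq_empty.mp hmeet
            · intro a haA b hbJ hab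
              have hbv : b ≠ v := fun h => hvJ (h ▸ hbJ)
              exact hmeet ⟨b, hbJ, hcl a haA b (hsub hbJ) hbv hab⟩
        · refine Or.inr (Or.inr ⟨?_, ?_⟩)
          · apply Set.eq_empty_of_subset_empty
            intro x hx
            exact (Set.eq_empty_iff_forall_notMem.mp hdisj x ⟨hAI hx.1, hx.2⟩).elim
          · intro a haA b hbJ
            exact Aux.nested_no_edge hnested hI hJ hdisj (hAI haA) hbJ
      have hnested' : Paper.Nested G (insert A 𝓘) := by
        apply Aux.nested_of_compatible
        · rintro S (rfl | hS)
          · exact ⟨⟨u, huA⟩, hconnA⟩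
          · exact hmem S hS
        · rintro S (rfl | hS) T (rfl | hT)
          · exact Or.inl subset_rfl
          · exact hcompat T hT
          · rcases hcompat S hS with h | h | ⟨h, h'⟩
            · exact Or.inr (Or.inl h)
            · exact Or.inl h
            · exact Or.inr (Or.inr ⟨Set.inter_comm S A ▸ Set.inter_comm A S ▸ h,
                fun a ha b hb hab => h' b hb a ha hab.symm⟩)
          · rcases hpairwise S hS T hT with h | h | h
            · exact Or.inl h
            · exact Or.inr (Or.inl h)
            · exact Or.inr (Or.inr ⟨h, fun a ha b hb =>
                Aux.nested_no_edge hnested hS hT h ha hb⟩)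
      have := hmaximal (insert A 𝓘) hnested' (Set.subset_insert A 𝓘)
      exact hAnot (this ▸ Set.mem_insert A 𝓘)
    refine ⟨fun v _ => hmaps v, fun u _ v _ h => hinj u v h, ?_⟩
    intro I hI
    obtain ⟨v, hv⟩ := hsurj I hI
    exact ⟨v, trivial, hv⟩
  refine ⟨part1, part2, ?_⟩
  choose Iv hIv1 hIv2 hIv3 using fun v => (part1 v).2.2
  have hbij : Set.BijOn Iv Set.univ 𝓘 := part2 Iv fun v => ⟨hIv1 v, hIv2 v, hIv3 v⟩
  rw [← hbij.image_eq, Set.ncard_image_of_injOn hbij.injOn, Set.ncard_univ,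
    Nat.card_eq_fintype_card]
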